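/- Let X be a metrizable space. Then X is a J-space if and only if every closed continuous map f : X → Y onto a non-compact metrizable space Y is perfect. -/

import Mathlib

/-- A Hausdorff space `X` is a *J-space* if whenever `A`, `B` are closed sets with
`A ∪ B = X` and `A ∩ B` compact, then `A` or `B` is compact. -/
def IsJSpace (X : Type*) [TopologicalSpace X] : Prop :=
  ∀ A B : Set X, IsClosed A → IsClosed B → A ∪ B = Set.univ →
    IsCompact (A ∩ B) → IsCompact A ∨ IsCompact B

/-- A Hausdorff space `X` is a *strong J-space* if every compact `K ⊆ X` is contained in
a compact `L ⊆ X` with `X \ L` connected (the empty set counting as connected). -/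
def IsStrongJSpace (X : Type*) [TopologicalSpace X] : Prop :=
  ∀ K : Set X, IsCompact K → ∃ L : Set X, IsCompact L ∧ K ⊆ L ∧ IsPreconnected Lᶜ

/-- A map is *perfect* if it is closed and all fibers are compact. -/
def IsPerfectMap {X Y : Type*} [TopologicalSpace X] [TopologicalSpace Y] (f : X → Y) : Prop :=
  IsClosedMap f ∧ ∀ y : Y, IsCompact (f ⁻¹' {y})

/-- A map is *boundary-perfect* if it is closed and the topological boundary of each
fiber is compact. -/
def IsBoundaryPerfectMap {X Y : Type*} [TopologicalSpace X] [TopologicalSpace Y]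
    (f : X → Y) : Prop :=
  IsClosedMap f ∧ ∀ y : Y, IsCompact (frontier (f ⁻¹' {y}))


namespace MetrizJAux

open Set Filter Topology Metric
open scoped Classical

set_option linter.unusedSectionVars false

universe u

variable {X : Type u} [MetricSpace X] (A B : Set X)

/-- capped distance to `A ∩ B` (equal to `1` if `A ∩ B = ∅`). -/
noncomputable def auxD (x : X) : ℝ :=
  if (A ∩ B).Nonempty then min 1 (Metric.infDist x (A ∩ B)) else 1

lemma auxD_nonneg (x : X) : 0 ≤ auxD A B x := by
  unfold auxD; split_ifs
  · exact le_min zero_le_one Metric.infDist_nonneg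
  · exact zero_le_one

lemma auxD_le_one (x : X) : auxD A B x ≤ 1 := by
  unfold auxD; split_ifs
  · exact min_le_left _ _
  · exact le_refl 1

lemma auxD_le_add (x y : X) : auxD A B x ≤ auxD A B y + min 1 (dist x y) := by
  unfold auxD; split_ifs with h
  · rcases le_total 1 (dist x y) with hd | hd
    · rw [min_eq_left hd]
      have := le_min zero_le_one (Metric.infDist_nonneg (x := y) (s := A ∩ B))
      linarith [min_le_left (1:ℝ) (Metric.infDist x (A ∩ B))]
    · rw [min_eq_right hd]
      have h1 : Metric.infDist x (A ∩ B) ≤ Metric.infDist y (A ∩ B) + dist x y :=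
        Metric.infDist_le_infDist_add_dist
      rcases le_total 1 (Metric.infDist y (A ∩ B)) with h2 | h2
      · rw [min_eq_left h2]
        calc min 1 (Metric.infDist x (A ∩ B)) ≤ 1 := min_le_left _ _
          _ ≤ 1 + dist x y := by linarith [dist_nonneg (x := x) (y := y)]
      · rw [min_eq_right h2]
        calc min 1 (Metric.infDist x (A ∩ B)) ≤ Metric.infDist x (A ∩ B) := min_le_right _ _
          _ ≤ Metric.infDist y (A ∩ B) + dist x y := h1
  · have : (0:ℝ) ≤ min 1 (dist x y) := le_min zero_le_one dist_nonneg
    linarith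

lemma auxD_le_dist {x k : X} (hk : k ∈ A ∩ B) : auxD A B x ≤ dist x k := by
  unfold auxD
  rw [if_pos ⟨k, hk⟩]
  exact le_trans (min_le_right _ _) (Metric.infDist_le_dist_of_mem hk)

lemma auxD_eq_zero {x : X} (hx : x ∈ A ∩ B) : auxD A B x = 0 := by
  unfold auxD
  rw [if_pos ⟨x, hx⟩, Metric.infDist_zero_of_mem hx]
  simp

lemma auxD_pos (hA : IsClosed A) (hB : IsClosed B) {x : X} (hx : x ∉ A ∩ B) :
    0 < auxD A B x := by
  unfold auxD; split_ifs with h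
  · refine lt_min one_pos ?_
    exact ((hA.inter hB).notMem_iff_infDist_pos h).1 hx
  · exact one_pos

lemma auxD_lt_one_eq (x : X) (h : auxD A B x < 1) :
    (A ∩ B).Nonempty ∧ auxD A B x = Metric.infDist x (A ∩ B) := by
  unfold auxD at *
  split_ifs at h ⊢ with hne
  · refine ⟨hne, ?_⟩
    rcases le_total (1:ℝ) (Metric.infDist x (A ∩ B)) with h2 | h2
    · rw [min_eq_left h2] at h; linarith
    · exact min_eq_right h2
  · exact absurd h (by norm_num)

/-- distance on the quotient-like space `Option ↥(B \ A)` obtained from `X` by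
collapsing `A` to the point `none`. -/
noncomputable def auxDist : Option ↥(B \ A) → Option ↥(B \ A) → ℝ
  | none, none => 0
  | none, some b => auxD A B ↑b
  | some b, none => auxD A B ↑b
  | some b, some c => min (min 1 (dist (b : X) (c : X))) (auxD A B ↑b + auxD A B ↑c)

lemma min_one_dist_triangle (x y z : X) :
    min 1 (dist x z) ≤ min 1 (dist x y) + min 1 (dist y z) := by
  rcases min_cases (1:ℝ) (dist x y) with ⟨h1, h1'⟩ | ⟨h1, h1'⟩ <;>
    rcases min_cases (1:ℝ) (dist y z) with ⟨h2, h2'⟩ | ⟨h2, h2'⟩ <;>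
    rcases min_cases (1:ℝ) (dist x z) with ⟨h3, h3'⟩ | ⟨h3, h3'⟩ <;>
    linarith [dist_triangle x y z, dist_nonneg (x := x) (y := y), dist_nonneg (x := y) (y := z),
      dist_nonneg (x := x) (y := z)]

lemma auxDist_comm (u v : Option ↥(B \ A)) : auxDist A B u v = auxDist A B v u := by
  cases u <;> cases v <;> simp [auxDist, dist_comm, add_comm, min_comm]

noncomputable def auxMetric (hA : IsClosed A) (hB : IsClosed B) :
    MetricSpace (Option ↥(B \ A)) where
  dist := auxDist A B
  dist_self u := by cases u <;> simp [auxDist, auxD_nonneg]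
  dist_comm := auxDist_comm A B
  dist_triangle u v w := by
    have hL : ∀ x y : ↥(B \ A), |auxD A B ↑x - auxD A B ↑y| ≤ min 1 (dist (x : X) (y : X)) := by
      intro x y
      rw [abs_sub_le_iff]
      constructor
      · linarith [auxD_le_add A B (x : X) (y : X)]
      · have := auxD_le_add A B (y : X) (x : X)
        rw [dist_comm (y:X) (x:X)] at this
        linarith
    have hDpos : ∀ x : ↥(B \ A), 0 ≤ auxD A B ↑x := fun x => auxD_nonneg A B _
    cases u with
    | none => cases v with
      | none => cases w with
        | none => simp [auxDist]
        | some d => simp [auxDist]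
      | some c => cases w with
        | none =>
          simp only [auxDist]
          linarith [hDpos c]
        | some d =>
          simp only [auxDist]
          have h1 := abs_sub_le_iff.1 (hL c d)
          rcases min_cases (min 1 (dist (c:X) (d:X))) (auxD A B ↑c + auxD A B ↑d) with
            ⟨h2, h2'⟩ | ⟨h2, h2'⟩ <;>
            linarith [hDpos c, hDpos d]
    | some b => cases v with
      | none => cases w with
        | none =>
          simp only [auxDist]
          linarith [hDpos b]
        | some d =>
          simp only [auxDist]
          exact min_le_right _ _
      | some c => cases w with
        | none =>
          simp only [auxDist]
          have h1 := abs_sub_le_iff.1 (hL b c)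
          rcases min_cases (min 1 (dist (b:X) (c:X))) (auxD A B ↑b + auxD A B ↑c) with
            ⟨h2, h2'⟩ | ⟨h2, h2'⟩ <;>
            linarith [hDpos b, hDpos c]
        | some d =>
          simp only [auxDist]
          have h1 := abs_sub_le_iff.1 (hL b c)
          have h2 := abs_sub_le_iff.1 (hL c d)
          have h3 := abs_sub_le_iff.1 (hL b d)
          have htri := min_one_dist_triangle (b:X) (c:X) (d:X)
          rcases min_cases (min 1 (dist (b:X) (c:X))) (auxD A B ↑b + auxD A B ↑c) with
            ⟨h4, h4'⟩ | ⟨h4, h4'⟩ <;>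
          rcases min_cases (min 1 (dist (c:X) (d:X))) (auxD A B ↑c + auxD A B ↑d) with
            ⟨h5, h5'⟩ | ⟨h5, h5'⟩ <;>
          rcases min_cases (min 1 (dist (b:X) (d:X))) (auxD A B ↑b + auxD A B ↑d) with
            ⟨h6, h6'⟩ | ⟨h6, h6'⟩ <;>
            linarith [hDpos b, hDpos c, hDpos d]
  eq_of_dist_eq_zero := by
    intro u v h
    replace h : auxDist A B u v = 0 := h
    cases u with
    | none => cases v with
      | none => rfl
      | some c =>
        simp only [auxDist] at h
        exact absurd h (auxD_pos A B hA hB (fun hc => c.2.2 hc.1)).ne'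
    | some b => cases v with
      | none =>
        simp only [auxDist] at h
        exact absurd h (auxD_pos A B hA hB (fun hc => b.2.2 hc.1)).ne'
      | some c =>
        have hb := auxD_pos A B hA hB (fun hc => b.2.2 hc.1)
        have hc := auxD_pos A B hA hB (fun hc => c.2.2 hc.1)
        simp only [auxDist] at h
        have hd : dist (b:X) (c:X) = 0 := by
          rcases min_cases (min 1 (dist (b:X) (c:X))) (auxD A B ↑b + auxD A B ↑c) with
            ⟨h2, h2'⟩ | ⟨h2, h2'⟩
          · rcases min_cases (1:ℝ) (dist (b:X) (c:X)) with ⟨h3, h3'⟩ | ⟨h3, h3'⟩ <;>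
              [linarith; linarith [dist_nonneg (x := (b:X)) (y := (c:X))]]
          · linarith
        exact congrArg some (Subtype.ext (by rwa [dist_eq_zero] at hd))

/-- the collapsing map `X → Option ↥(B \ A)`. -/
noncomputable def auxF (x : X) : Option ↥(B \ A) :=
  if h : x ∈ B \ A then some ⟨x, h⟩ else none

lemma auxF_eq_none (hU : A ∪ B = univ) {x : X} : auxF A B x = none ↔ x ∈ A := by
  constructor
  · intro h
    by_contra hx
    have hxB : x ∈ B := by
      have := eq_univ_iff_forall.1 hU x
      exact Or.resolve_left this hx
    rw [auxF, dif_pos ⟨hxB, hx⟩] at h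
    exact Option.some_ne_none _ h
  · intro h
    rw [auxF, dif_neg (fun hc => hc.2 h)]

lemma auxF_of_mem {x : X} (hx : x ∈ B \ A) : auxF A B x = some ⟨x, hx⟩ := dif_pos hx

lemma auxF_dist_some (x : X) (b : ↥(B \ A)) :
    auxDist A B (auxF A B x) (some b) =
      if x ∈ B \ A then min (min 1 (dist x (b : X))) (auxD A B x + auxD A B ↑b)
      else auxD A B ↑b := by
  unfold auxF
  split_ifs with h <;> simp [auxDist]

lemma auxF_dist_none (x : X) :
    auxDist A B (auxF A B x) none = if x ∈ B \ A then auxD A B x else 0 := by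
  unfold auxF
  split_ifs with h <;> simp [auxDist]

lemma near_some (hA : IsClosed A) (hB : IsClosed B) {x : X} {b : ↥(B \ A)}
    (hlt : auxDist A B (auxF A B x) (some b) < min 1 (auxD A B ↑b)) :
    x ∈ B \ A ∧ dist x (b : X) = auxDist A B (auxF A B x) (some b) := by
  have hDb : 0 < auxD A B ↑b := auxD_pos A B hA hB (fun hc => b.2.2 hc.1)
  by_cases hx : x ∈ B \ A
  · rw [auxF_dist_some, if_pos hx] at hlt ⊢
    have hDx : 0 ≤ auxD A B x := auxD_nonneg A B x
    refine ⟨hx, ?_⟩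
    have h1 : min (min 1 (dist x (b : X))) (auxD A B x + auxD A B ↑b)
        = min 1 (dist x (b : X)) := by
      rcases min_cases (min 1 (dist x (b : X))) (auxD A B x + auxD A B ↑b) with
        ⟨h2, h2'⟩ | ⟨h2, h2'⟩
      · exact h2
      · exfalso
        have := min_le_right (1:ℝ) (auxD A B ↑b)
        linarith
    rw [h1] at hlt ⊢
    rcases min_cases (1:ℝ) (dist x (b : X)) with ⟨h2, h2'⟩ | ⟨h2, h2'⟩
    · exfalso
      have := min_le_left (1:ℝ) (auxD A B ↑b)
      linarith
    · exact h2.symm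
  · rw [auxF_dist_some, if_neg hx] at hlt
    have := min_le_right (1:ℝ) (auxD A B ↑b)
    linarith

lemma tendsto_of_auxD (hK : IsCompact (A ∩ B)) (c : ℕ → X)
    (hconv : Filter.Tendsto (fun n => auxD A B (c n)) atTop (𝓝 0)) :
    ∃ κ ∈ A ∩ B, ∃ φ : ℕ → ℕ, StrictMono φ ∧ Filter.Tendsto (c ∘ φ) atTop (𝓝 κ) := by
  have hne : (A ∩ B).Nonempty := by
    by_contra hempty
    have h1 : ∀ n, auxD A B (c n) = 1 := fun n => by rw [auxD, if_neg hempty]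
    have : Filter.Tendsto (fun _ : ℕ => (1:ℝ)) atTop (𝓝 0) := hconv.congr h1
    simpa using tendsto_nhds_unique this tendsto_const_nhds
  have hev : ∀ᶠ n in atTop, auxD A B (c n) = Metric.infDist (c n) (A ∩ B) := by
    filter_upwards [hconv.eventually (gt_mem_nhds one_pos)] with n hn
    exact (auxD_lt_one_eq A B (c n) hn).2
  have hinf : Filter.Tendsto (fun n => Metric.infDist (c n) (A ∩ B)) atTop (𝓝 0) :=
    hconv.congr' hev
  have hchoose : ∀ n : ℕ, ∃ y ∈ A ∩ B, dist (c n) y <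
      Metric.infDist (c n) (A ∩ B) + 1 / (n + 1) := by
    intro n
    apply (Metric.infDist_lt_iff hne).1
    have : (0:ℝ) < 1 / (n + 1) := by positivity
    linarith
  choose k hk hkd using hchoose
  obtain ⟨κ, hκ, φ, hφ, hkφ⟩ := hK.isSeqCompact hk
  refine ⟨κ, hκ, φ, hφ, ?_⟩
  rw [tendsto_iff_dist_tendsto_zero]
  have hrhs : Filter.Tendsto (fun j => Metric.infDist (c (φ j)) (A ∩ B) + 1 / (φ j + 1 : ℝ) +
      dist (k (φ j)) κ) atTop (𝓝 0) := by
    have h1 := hinf.comp hφ.tendsto_atTop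
    have h2 := (tendsto_one_div_add_atTop_nhds_zero_nat :
      Tendsto (fun n : ℕ => 1 / ((n : ℝ) + 1)) atTop (𝓝 0)).comp hφ.tendsto_atTop
    have h3 := (tendsto_iff_dist_tendsto_zero).1 hkφ
    simpa using (h1.add h2).add h3
  refine squeeze_zero (fun j => dist_nonneg) (fun j => ?_) hrhs
  calc dist ((c ∘ φ) j) κ ≤ dist (c (φ j)) (k (φ j)) + dist (k (φ j)) κ := dist_triangle _ _ _
    _ ≤ Metric.infDist (c (φ j)) (A ∩ B) + 1 / (φ j + 1 : ℝ) + dist (k (φ j)) κ := by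
        have := hkd (φ j)
        linarith


lemma vainstein {X : Type*} [MetricSpace X] {Y : Type*} [TopologicalSpace Y]
    [FirstCountableTopology Y] [T1Space Y] {f : X → Y} (hf : Continuous f)
    (hcl : IsClosedMap f) (y : Y) : IsCompact (frontier (f ⁻¹' {y})) := by
  by_contra hnc
  set F := f ⁻¹' {y} with hF
  have hFcl : IsClosed F := IsClosed.preimage hf isClosed_singleton
  have hfr : IsClosed (frontier F) := isClosed_frontier
  have hseq : ¬ IsSeqCompact (frontier F) := fun h => hnc h.isCompact
  rw [IsSeqCompact] at hseq
  push_neg at hseq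
  obtain ⟨x, hxmem, hx⟩ := hseq
  -- no cluster points of x at all
  have hnocl : ∀ p : X, ¬ MapClusterPt p atTop x := by
    intro p hp
    obtain ⟨ψ, hψ, hψt⟩ := TopologicalSpace.FirstCountableTopology.tendsto_subseq hp
    have hpmem : p ∈ frontier F := by
      have : p ∈ closure (frontier F) :=
        mem_closure_of_tendsto hψt (Eventually.of_forall fun n => hxmem _)
      rwa [hfr.closure_eq] at this
    exact hx p hpmem ψ hψ hψt
  -- countable basis at y
  obtain ⟨U, hU⟩ := (𝓝 y).exists_antitone_basis
  -- choose z n ∉ F close to x n with f (z n) ∈ U n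
  have hz : ∀ n : ℕ, ∃ z : X, z ∉ F ∧ dist z (x n) < 1 / (n + 1) ∧ f z ∈ U n := by
    intro n
    have hx1 : x n ∈ closure Fᶜ := by
      have := hxmem n
      rw [frontier_eq_closure_inter_closure] at this
      exact this.2
    have hnb : (ball (x n) (1 / (n + 1)) ∩ f ⁻¹' (U n)) ∈ 𝓝 (x n) := by
      apply Filter.inter_mem
      · exact ball_mem_nhds _ (by positivity)
      · exact hf.continuousAt.preimage_mem_nhds (by
          have hxF : x n ∈ F := (frontier_subset_iff_isClosed.2 hFcl) (hxmem n)
          have : f (x n) = y := hxF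
          rw [this]; exact hU.toHasBasis.mem_of_mem trivial)
    rcases mem_closure_iff_nhds.1 hx1 _ hnb with ⟨z, ⟨hz1, hz2⟩, hz3⟩
    exact ⟨z, hz3, by simpa [dist_comm] using mem_ball.1 hz1, hz2⟩
  choose z hzF hzd hzU using hz
  -- C := range z is closed
  have hCcl : IsClosed (range z) := by
    rw [← closure_subset_iff_isClosed]
    intro p hp
    by_contra hpC
    rw [mem_closure_iff_seq_limit] at hp
    obtain ⟨u, hu, hup⟩ := hp
    choose g hg using hu
    -- g tends to atTop
    have hgtop : Tendsto g atTop atTop := by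
      rw [tendsto_atTop_atTop]
      by_contra hcon
      push_neg at hcon
      obtain ⟨N, hN⟩ := hcon
      have hfreq : ∃ᶠ m in atTop, u m ∈ z '' (Iio N) := by
        rw [frequently_atTop]
        intro a
        obtain ⟨m, hm, hm2⟩ := hN a
        exact ⟨m, hm, ⟨g m, by simpa using hm2, hg m⟩⟩
      have hfin : (z '' (Iio N)).Finite := (Set.finite_Iio _).image _
      have : p ∈ z '' (Iio N) := hfin.isClosed.mem_of_frequently_of_tendsto hfreq hup
      exact hpC (image_subset_range _ _ this)
    -- x ∘ g tends to p
    have hxg : Tendsto (fun m => x (g m)) atTop (𝓝 p) := by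
      rw [tendsto_iff_dist_tendsto_zero]
      have h1 : Tendsto (fun m => dist (u m) p + 1 / (g m + 1 : ℝ)) atTop (𝓝 0) := by
        have ha : Tendsto (fun m => dist (u m) p) atTop (𝓝 0) :=
          tendsto_iff_dist_tendsto_zero.1 hup
        have hb : Tendsto (fun m => 1 / (g m + 1 : ℝ)) atTop (𝓝 0) :=
          (tendsto_one_div_add_atTop_nhds_zero_nat).comp hgtop
        simpa using ha.add hb
      refine squeeze_zero (fun m => dist_nonneg) (fun m => ?_) h1
      calc dist (x (g m)) p ≤ dist (x (g m)) (z (g m)) + dist (z (g m)) p := dist_triangle _ _ _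
        _ ≤ dist (u m) p + 1 / (g m + 1 : ℝ) := by
            rw [← hg m]
            linarith [hzd (g m), dist_comm (x (g m)) (z (g m))]
    -- so p is a cluster point of x
    apply hnocl p
    have h1 : map (fun m => x (g m)) atTop ≤ 𝓝 p := hxg
    have h2 : map (fun m => x (g m)) atTop ≤ map x atTop := by
      rw [show (fun m => x (g m)) = x ∘ g from rfl, ← Filter.map_map]
      exact map_mono hgtop
    exact Filter.neBot_of_le (le_inf h1 h2)
  -- y is in the closure of f '' range z
  have hyc : y ∈ closure (f '' range z) := by
    rw [mem_closure_iff_nhds]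
    intro V hV
    obtain ⟨n, -, hn⟩ := hU.toHasBasis.mem_iff.1 hV
    exact ⟨f (z n), hn (hzU n), mem_image_of_mem f (mem_range_self n)⟩
  rw [(hcl _ hCcl).closure_eq] at hyc
  obtain ⟨w, ⟨n, rfl⟩, hw⟩ := hyc
  exact hzF n hw


lemma forward_dir {X : Type*} [TopologicalSpace X] [TopologicalSpace.MetrizableSpace X]
    (hJ : IsJSpace X) {Y : Type*} [TopologicalSpace Y] [TopologicalSpace.MetrizableSpace Y]
    (hnc : ¬CompactSpace Y) (f : X → Y) (hf : Continuous f) (hsurj : Function.Surjective f)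
    (hcl : IsClosedMap f) : IsPerfectMap f := by
  letI : MetricSpace X := TopologicalSpace.metrizableSpaceMetric X
  letI : MetricSpace Y := TopologicalSpace.metrizableSpaceMetric Y
  refine ⟨hcl, fun y => ?_⟩
  set F := f ⁻¹' {y} with hF
  have hFcl : IsClosed F := IsClosed.preimage hf isClosed_singleton
  have hfr : IsCompact (frontier F) := vainstein hf hcl y
  have hAB : F ∪ closure Fᶜ = univ := by
    apply eq_univ_of_univ_subset
    intro p _
    by_cases hp : p ∈ F
    · exact Or.inl hp
    · exact Or.inr (subset_closure hp)
  have hint : F ∩ closure Fᶜ = frontier F := by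
    rw [frontier_eq_closure_inter_closure, hFcl.closure_eq]
  rcases hJ F (closure Fᶜ) hFcl isClosed_closure hAB (hint ▸ hfr) with h | h
  · exact h
  · exfalso
    apply hnc
    rw [← isCompact_univ_iff]
    have himg : (univ : Set Y) ⊆ {y} ∪ f '' closure Fᶜ := by
      intro q _
      obtain ⟨x, rfl⟩ := hsurj q
      by_cases hx : x ∈ F
      · exact Or.inl hx
      · exact Or.inr (mem_image_of_mem f (subset_closure hx))
    exact (isCompact_singleton.union (h.image hf)).of_isClosed_subset isClosed_univ himg

lemma converse_dir {X : Type u} [TopologicalSpace X] [TopologicalSpace.MetrizableSpace X]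
    (h : ∀ (Y : Type u) [TopologicalSpace Y] [TopologicalSpace.MetrizableSpace Y],
      ¬CompactSpace Y → ∀ f : X → Y, Continuous f → Function.Surjective f →
        IsClosedMap f → IsPerfectMap f) : IsJSpace X := by
  intro A B hA hB hU hK
  by_contra hcon
  push_neg at hcon
  obtain ⟨hAnc, hBnc⟩ := hcon
  letI : MetricSpace X := TopologicalSpace.metrizableSpaceMetric X
  letI instY : MetricSpace (Option ↥(B \ A)) := auxMetric A B hA hB
  have hdd : ∀ u v : Option ↥(B \ A), dist u v = auxDist A B u v := fun _ _ => rfl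
  set f : X → Option ↥(B \ A) := auxF A B with hfdef
  have hAne : A.Nonempty := by
    rcases A.eq_empty_or_nonempty with rfl | hne
    · exact absurd isCompact_empty hAnc
    · exact hne
  have hmemB : ∀ x : X, x ∉ A → x ∈ B \ A :=
    fun x hx => ⟨Or.resolve_left (eq_univ_iff_forall.1 hU x) hx, hx⟩
  -- continuity
  have hcont : Continuous f := by
    rw [Metric.continuous_iff]
    intro x ε hε
    by_cases hx : x ∈ A
    · by_cases hxB : x ∈ B
      · refine ⟨ε, hε, fun y hy => ?_⟩
        rw [hdd, hfdef, (auxF_eq_none A B hU).2 hx, auxF_dist_none]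
        split_ifs with hy2
        · exact lt_of_le_of_lt (auxD_le_dist A B ⟨hx, hxB⟩) hy
        · exact hε
      · obtain ⟨δ, hδ, hball⟩ := Metric.isOpen_iff.1 hB.isOpen_compl x hxB
        refine ⟨δ, hδ, fun y hy => ?_⟩
        have hyB : y ∉ B := hball (Metric.mem_ball.2 hy)
        rw [hdd, hfdef, (auxF_eq_none A B hU).2 hx, auxF_dist_none,
          if_neg (fun hc : y ∈ B \ A => hyB hc.1)]
        exact hε
    · have hxBA : x ∈ B \ A := hmemB x hx
      obtain ⟨δ, hδ, hball⟩ := Metric.isOpen_iff.1 hA.isOpen_compl x hx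
      refine ⟨min δ ε, lt_min hδ hε, fun y hy => ?_⟩
      have hyA : y ∉ A := hball (Metric.mem_ball.2 (lt_of_lt_of_le hy (min_le_left _ _)))
      have hyBA : y ∈ B \ A := hmemB y hyA
      rw [hdd, hfdef, auxF_of_mem A B hxBA, auxF_dist_some, if_pos hyBA]
      calc min (min 1 (dist y x)) (auxD A B y + auxD A B x)
          ≤ min 1 (dist y x) := min_le_left _ _
        _ ≤ dist y x := min_le_right _ _
        _ < ε := lt_of_lt_of_le hy (min_le_right _ _)
  -- surjectivity
  have hsurj : Function.Surjective f := by
    intro v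
    cases v with
    | none => exact ⟨hAne.choose, (auxF_eq_none A B hU).2 hAne.choose_spec⟩
    | some b => exact ⟨↑b, by rw [hfdef, auxF_of_mem A B b.2, Subtype.coe_eta]⟩
  -- key convergence fact near a point `some b`
  have hsome : ∀ (c : ℕ → X) (b : ↥(B \ A)),
      Filter.Tendsto (fun n => f (c n)) atTop (𝓝 (some b)) →
      (∀ᶠ n in atTop, c n ∈ B \ A) ∧ Filter.Tendsto c atTop (𝓝 (b : X)) := by
    intro c b hconv
    have hDb : 0 < min 1 (auxD A B ↑b) :=
      lt_min one_pos (auxD_pos A B hA hB (fun hc => b.2.2 hc.1))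
    have hdist := tendsto_iff_dist_tendsto_zero.1 hconv
    have hev : ∀ᶠ n in atTop, dist (f (c n)) (some b) < min 1 (auxD A B ↑b) :=
      hdist.eventually (gt_mem_nhds hDb)
    have hev2 : ∀ᶠ n in atTop, c n ∈ B \ A ∧ dist (c n) (b : X) = dist (f (c n)) (some b) := by
      filter_upwards [hev] with n hn
      have := near_some A B hA hB (x := c n) (b := b) (by rw [← hdd]; exact hn)
      rw [hdd]
      exact this
    refine ⟨hev2.mono (fun n hn => hn.1), ?_⟩
    rw [tendsto_iff_dist_tendsto_zero]
    exact hdist.congr' (hev2.mono fun n hn => hn.2.symm)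
  -- key convergence fact near `none`
  have hnone : ∀ (c : ℕ → X), (∀ n, c n ∈ B \ A) →
      Filter.Tendsto (fun n => f (c n)) atTop (𝓝 none) →
      ∃ κ ∈ A ∩ B, ∃ φ : ℕ → ℕ, StrictMono φ ∧ Filter.Tendsto (c ∘ φ) atTop (𝓝 κ) := by
    intro c hcmem hconv
    apply tendsto_of_auxD A B hK c
    have hdist := tendsto_iff_dist_tendsto_zero.1 hconv
    refine hdist.congr (fun n => ?_)
    rw [hdd, hfdef, auxF_dist_none, if_pos (hcmem n)]
  -- closedness
  have hclosed : IsClosedMap f := by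
    intro C hC
    apply IsSeqClosed.isClosed
    intro u p hu hup
    choose c hcC hfc using hu
    have hfc' : Filter.Tendsto (fun n => f (c n)) atTop (𝓝 p) := by
      rw [show (fun n => f (c n)) = u from funext hfc]
      exact hup
    cases p with
    | some b =>
      obtain ⟨-, hct⟩ := hsome c b hfc'
      have hbC : (b : X) ∈ C := hC.closure_eq ▸ mem_closure_of_tendsto hct
        (Eventually.of_forall hcC)
      exact ⟨↑b, hbC, by rw [hfdef, auxF_of_mem A B b.2, Subtype.coe_eta]⟩
    | none =>
      by_cases hex : ∃ n, c n ∈ A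
      · obtain ⟨n, hn⟩ := hex
        exact ⟨c n, hcC n, (auxF_eq_none A B hU).2 hn⟩
      · push_neg at hex
        obtain ⟨κ, hκ, φ, hφ, hct⟩ := hnone c (fun n => hmemB _ (hex n)) hfc'
        have hκC : κ ∈ C := hC.closure_eq ▸ mem_closure_of_tendsto hct
          (Eventually.of_forall fun n => hcC (φ n))
        exact ⟨κ, hκC, (auxF_eq_none A B hU).2 hκ.1⟩
  -- non-compactness of the target
  have hnc : ¬CompactSpace (Option ↥(B \ A)) := by
    intro hcY
    apply hBnc
    apply IsSeqCompact.isCompact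
    intro u hu
    obtain ⟨p, -, φ, hφ, hupφ⟩ :=
      (isCompact_univ (X := Option ↥(B \ A))).isSeqCompact (x := fun n => f (u n))
        (fun n => mem_univ _)
    cases p with
    | some b =>
      obtain ⟨-, hct⟩ := hsome (fun n => u (φ n)) b hupφ
      exact ⟨↑b, b.2.1, φ, hφ, hct⟩
    | none =>
      by_cases hfreq : ∃ᶠ j in atTop, u (φ j) ∈ A ∩ B
      · obtain ⟨κ, hκ, ψ, hψ, hct⟩ := hK.isSeqCompact.subseq_of_frequently_in hfreq
        exact ⟨κ, hκ.2, φ ∘ ψ, hφ.comp hψ, hct⟩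
      · rw [Filter.not_frequently] at hfreq
        obtain ⟨N, hN⟩ := Filter.eventually_atTop.1 hfreq
        set c : ℕ → X := fun j => u (φ (j + N)) with hcdef
        have hcmem : ∀ j, c j ∈ B \ A := by
          intro j
          have h1 : u (φ (j + N)) ∉ A ∩ B := hN (j + N) (Nat.le_add_left N j)
          have h2 : u (φ (j + N)) ∈ B := hu _
          exact ⟨h2, fun hc => h1 ⟨hc, h2⟩⟩
        have hcconv : Filter.Tendsto (fun j => f (c j)) atTop (𝓝 none) := by
          have : Filter.Tendsto (fun j => j + N) atTop atTop := tendsto_add_atTop_nat N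
          exact hupφ.comp this
        obtain ⟨κ, hκ, ψ, hψ, hct⟩ := hnone c hcmem hcconv
        refine ⟨κ, hκ.2, fun j => φ (ψ j + N), ?_, hct⟩
        intro a b hab
        exact hφ (Nat.add_lt_add_right (hψ hab) N)
  -- apply the hypothesis
  have hperf := h _ hnc f hcont hsurj hclosed
  apply hAnc
  have hfib : f ⁻¹' {none} = A := by
    ext x
    simp only [mem_preimage, mem_singleton_iff, hfdef]
    exact auxF_eq_none A B hU
  rw [← hfib]
  exact hperf.2 none


end MetrizJAux

/-- A metrizable space `X` is a J-space iff every closed map from `X` onto a non-compact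
metrizable space is perfect. -/
theorem metrizable_isJSpace_iff_closedMap_onto_noncompact_perfect (X : Type u)
    [TopologicalSpace X] [TopologicalSpace.MetrizableSpace X] :
    IsJSpace X ↔
      ∀ (Y : Type u) [TopologicalSpace Y] [TopologicalSpace.MetrizableSpace Y],
        ¬CompactSpace Y → ∀ f : X → Y, Continuous f → Function.Surjective f →
          IsClosedMap f → IsPerfectMap f := by
  constructor
  · intro hJ Y _ _ hnc f hf hsurj hcl
    exact MetrizJAux.forward_dir hJ hnc f hf hsurj hcl
  · exact MetrizJAux.converse_dir
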